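/- Let n ≥ 2 and m be natural numbers. Suppose for each i ∈ {1,…,m} we are given indices k_i < ℓ_i in {0,…,n−1} and a 2×2 complex unitary matrix A_i, and let Ã_i denote the n×n embedding of A_i at positions (k_i, ℓ_i). Then the matrix entropy of the product satisfies Φ(Ã_m · Ã_{m−1} ⋯ Ã_1) ≤ 2m. -/

import Mathlib

open Matrix

/-- The matrix entropy Φ(M) = −∑_{p,q} |M(p,q)|²·log₂ |M(p,q)|². -/
noncomputable def matrixEntropy {n : ℕ} (M : Matrix (Fin n) (Fin n) ℂ) : ℝ :=
  -∑ p, ∑ q, ‖M p q‖ ^ 2 * Real.logb 2 (‖M p q‖ ^ 2)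

/-- The `n×n` embedding of a `2×2` matrix `A` at positions `(k, l)`:
`Ã(k,k)=A(1,1)`, `Ã(k,l)=A(1,2)`, `Ã(l,k)=A(2,1)`, `Ã(l,l)=A(2,2)`,
`Ã(j,j)=1` for `j ∉ {k,l}`, and all other entries `0`. -/
def embedAt {n : ℕ} (k l : Fin n) (A : Matrix (Fin 2) (Fin 2) ℂ) :
    Matrix (Fin n) (Fin n) ℂ := fun p q =>
  if p = k ∧ q = k then A 0 0
  else if p = k ∧ q = l then A 0 1
  else if p = l ∧ q = k then A 1 0
  else if p = l ∧ q = l then A 1 1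
  else if p = q then 1
  else 0

private lemma xlog_lower (x s : ℝ) (hx : 0 ≤ x) (hxs : x ≤ s) :
    -(x * Real.log x) ≤ -(x * Real.log s) + x * Real.log 2 + (s/2 - x) := by
  rcases eq_or_lt_of_le hx with h | h
  · simp [← h]; linarith
  · have hs : 0 < s := lt_of_lt_of_le h hxs
    have ht : (0:ℝ) < s / (2*x) := by positivity
    have h1 : Real.log (s / (2*x)) ≤ s/(2*x) - 1 := Real.log_le_sub_one_of_pos ht
    have h2 : Real.log (s / (2*x)) = Real.log s - (Real.log 2 + Real.log x) := by
      rw [Real.log_div (ne_of_gt hs) (by positivity), Real.log_mul (by norm_num) (ne_of_gt h)]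
    have h3 : x * Real.log (s/(2*x)) ≤ x * (s/(2*x) - 1) :=
      mul_le_mul_of_nonneg_left h1 hx
    have h4 : x * (s/(2*x) - 1) = s/2 - x := by field_simp
    rw [h2] at h3
    nlinarith

private lemma ent_add (x y : ℝ) (hx : 0 ≤ x) (hy : 0 ≤ y) :
    -(x * Real.logb 2 x) + -(y * Real.logb 2 y) ≤ -((x+y) * Real.logb 2 (x+y)) + (x+y) := by
  have hc : (0:ℝ) < Real.log 2 := Real.log_pos (by norm_num)
  have h1 := xlog_lower x (x+y) hx (by linarith)
  have h2 := xlog_lower y (x+y) hy (by linarith)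
  have key : -(x*Real.log x) + -(y*Real.log y) ≤ -((x+y)*Real.log (x+y)) + (x+y)*Real.log 2 := by
    linarith
  have key2 : (-(x*Real.log x) + -(y*Real.log y))/Real.log 2 ≤
      (-((x+y)*Real.log (x+y)) + (x+y)*Real.log 2)/Real.log 2 := by gcongr
  have e1 : (-((x+y)*Real.log (x+y)) + (x+y)*Real.log 2)/Real.log 2
      = -((x+y) * (Real.log (x+y)/Real.log 2)) + (x+y) := by field_simp
  have e2 : (-(x*Real.log x) + -(y*Real.log y))/Real.log 2
      = -(x*(Real.log x/Real.log 2)) + -(y*(Real.log y/Real.log 2)) := by ring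
  simp only [Real.logb]
  rw [e1, e2] at key2
  linarith

private lemma mul_logb_le (x y : ℝ) (hx : 0 ≤ x) (hy : 0 ≤ y) :
    x * Real.logb 2 x + y * Real.logb 2 y ≤ (x+y) * Real.logb 2 (x+y) := by
  have h1 : x * Real.logb 2 x ≤ x * Real.logb 2 (x+y) := by
    rcases eq_or_lt_of_le hx with h | h
    · simp [← h]
    · exact mul_le_mul_of_nonneg_left
        (Real.logb_le_logb_of_le (by norm_num) h (by linarith)) hx
  have h2 : y * Real.logb 2 y ≤ y * Real.logb 2 (x+y) := by
    rcases eq_or_lt_of_le hy with h | h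
    · simp [← h]
    · exact mul_le_mul_of_nonneg_left
        (Real.logb_le_logb_of_le (by norm_num) h (by linarith)) hy
  calc x * Real.logb 2 x + y * Real.logb 2 y ≤ x * Real.logb 2 (x+y) + y * Real.logb 2 (x+y) := by linarith
  _ = (x+y) * Real.logb 2 (x+y) := by ring


variable {n : ℕ} (k l : Fin n) (A : Matrix (Fin 2) (Fin 2) ℂ) (M : Matrix (Fin n) (Fin n) ℂ)

lemma embed_mul_apply_fst (hkl : k ≠ l) (q : Fin n) :
    (embedAt k l A * M) k q = A 0 0 * M k q + A 0 1 * M l q := by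
  rw [Matrix.mul_apply]
  have h := Finset.sum_eq_add (s := Finset.univ)
      (f := fun j => embedAt k l A k j * M j q) k l hkl
      (fun c _ hc => by simp [embedAt, hc.1, hc.2, hkl, Ne.symm hc.1])
      (fun h => absurd (Finset.mem_univ _) h)
      (fun h => absurd (Finset.mem_univ _) h)
  rw [h]
  simp [embedAt, hkl, Ne.symm hkl]

lemma embed_mul_apply_snd (hkl : k ≠ l) (q : Fin n) :
    (embedAt k l A * M) l q = A 1 0 * M k q + A 1 1 * M l q := by
  rw [Matrix.mul_apply]
  have h := Finset.sum_eq_add (s := Finset.univ)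
      (f := fun j => embedAt k l A l j * M j q) k l hkl
      (fun c _ hc => by simp [embedAt, hc.1, hc.2, hkl, Ne.symm hc.2])
      (fun h => absurd (Finset.mem_univ _) h)
      (fun h => absurd (Finset.mem_univ _) h)
  rw [h]
  simp [embedAt, hkl, Ne.symm hkl]

lemma embed_mul_apply_other {p : Fin n} (hp1 : p ≠ k) (hp2 : p ≠ l) (q : Fin n) :
    (embedAt k l A * M) p q = M p q := by
  rw [Matrix.mul_apply]
  have h : ∀ j, embedAt k l A p j * M j q = if p = j then M j q else 0 := by
    intro j
    by_cases h : p = j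
    · subst h; simp [embedAt, hp1, hp2]
    · simp [embedAt, hp1, hp2, h]
  simp only [h]
  rw [Finset.sum_ite_eq]
  simp

lemma embed_mul_conjT (hkl : k ≠ l) (hA : Aᴴ * A = 1) :
    embedAt k l A * (embedAt k l A)ᴴ = 1 := by
  have hA' : A * Aᴴ = 1 := mul_eq_one_comm.mp hA
  have r00 : A 0 0 * star (A 0 0) + A 0 1 * star (A 0 1) = 1 := by
    have := congrFun (congrFun hA' 0) 0
    simpa [Matrix.mul_apply, Fin.sum_univ_two, Matrix.conjTranspose_apply,
      Matrix.one_apply] using this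
  have r01 : A 0 0 * star (A 1 0) + A 0 1 * star (A 1 1) = 0 := by
    have := congrFun (congrFun hA' 0) 1
    simpa [Matrix.mul_apply, Fin.sum_univ_two, Matrix.conjTranspose_apply,
      Matrix.one_apply] using this
  have r10 : A 1 0 * star (A 0 0) + A 1 1 * star (A 0 1) = 0 := by
    have := congrFun (congrFun hA' 1) 0
    simpa [Matrix.mul_apply, Fin.sum_univ_two, Matrix.conjTranspose_apply,
      Matrix.one_apply] using this
  have r11 : A 1 0 * star (A 1 0) + A 1 1 * star (A 1 1) = 1 := by
    have := congrFun (congrFun hA' 1) 1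
    simpa [Matrix.mul_apply, Fin.sum_univ_two, Matrix.conjTranspose_apply,
      Matrix.one_apply] using this
  ext p q
  by_cases hp1 : p = k
  · subst hp1
    rw [embed_mul_apply_fst _ _ _ _ hkl, Matrix.conjTranspose_apply,
      Matrix.conjTranspose_apply]
    by_cases hq1 : q = p
    · subst hq1
      simpa [embedAt, hkl, Ne.symm hkl, Matrix.one_apply] using r00
    · by_cases hq2 : q = l
      · subst hq2
        simpa [embedAt, hkl, Ne.symm hkl, Matrix.one_apply] using r01
      · simp [embedAt, hkl, Ne.symm hkl, hq1, hq2, Ne.symm hq1, Ne.symm hq2,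
          Matrix.one_apply]
  · by_cases hp2 : p = l
    · subst hp2
      rw [embed_mul_apply_snd _ _ _ _ hkl, Matrix.conjTranspose_apply,
        Matrix.conjTranspose_apply]
      by_cases hq1 : q = k
      · subst hq1
        simpa [embedAt, hkl, Ne.symm hkl, Matrix.one_apply] using r10
      · by_cases hq2 : q = p
        · subst hq2
          simpa [embedAt, hkl, Ne.symm hkl, Matrix.one_apply] using r11
        · simp [embedAt, hkl, Ne.symm hkl, hq1, hq2, Ne.symm hq1, Ne.symm hq2,
            Matrix.one_apply]
    · rw [embed_mul_apply_other _ _ _ _ hp1 hp2, Matrix.conjTranspose_apply]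
      by_cases hq1 : q = k
      · subst hq1
        simp [embedAt, hp1, hp2, Ne.symm hp1, Ne.symm hp2, Matrix.one_apply]
      · by_cases hq2 : q = l
        · subst hq2
          simp [embedAt, hp1, hp2, Ne.symm hp1, Ne.symm hp2, Matrix.one_apply]
        · by_cases hpq : p = q
          · subst hpq; simp [embedAt, hq1, hq2, Matrix.one_apply]
          · simp [embedAt, hq1, hq2, hpq, Ne.symm hpq, Matrix.one_apply]


noncomputable def rEnt {n : ℕ} (M : Matrix (Fin n) (Fin n) ℂ) (p : Fin n) : ℝ :=
  ∑ q, -(Complex.normSq (M p q) * Real.logb 2 (Complex.normSq (M p q)))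

lemma matrixEntropy_eq_sum {n : ℕ} (M : Matrix (Fin n) (Fin n) ℂ) :
    matrixEntropy M = ∑ p, rEnt M p := by
  unfold matrixEntropy rEnt
  rw [← Finset.sum_neg_distrib]
  refine Finset.sum_congr rfl fun p _ => ?_
  rw [← Finset.sum_neg_distrib]
  simp [Complex.sq_norm]

lemma matrixEntropy_one {n : ℕ} : matrixEntropy (1 : Matrix (Fin n) (Fin n) ℂ) = 0 := by
  unfold matrixEntropy
  rw [neg_eq_zero]
  refine Finset.sum_eq_zero fun p _ => Finset.sum_eq_zero fun q _ => ?_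
  rcases eq_or_ne p q with h | h <;> simp [Matrix.one_apply, h]

private lemma ent_pair (x y x' y' : ℝ) (hx : 0 ≤ x) (hy : 0 ≤ y) (hx' : 0 ≤ x')
    (hy' : 0 ≤ y') (h : x' + y' = x + y) :
    -(x' * Real.logb 2 x') + -(y' * Real.logb 2 y') ≤
      (-(x * Real.logb 2 x) + -(y * Real.logb 2 y)) + (x + y) := by
  have h1 := ent_add x' y' hx' hy'
  rw [h] at h1
  have h2 := mul_logb_le x y hx hy
  linarith

lemma key_step {n : ℕ} (k l : Fin n) (A : Matrix (Fin 2) (Fin 2) ℂ)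
    (M : Matrix (Fin n) (Fin n) ℂ) (hkl : k ≠ l) (hA : Aᴴ * A = 1) (hM : M * Mᴴ = 1) :
    matrixEntropy (embedAt k l A * M) ≤ matrixEntropy M + 2 := by
  have c00 : star (A 0 0) * A 0 0 + star (A 1 0) * A 1 0 = 1 := by
    have := congrFun (congrFun hA 0) 0
    simpa [Matrix.mul_apply, Fin.sum_univ_two, Matrix.conjTranspose_apply,
      Matrix.one_apply] using this
  have c01 : star (A 0 0) * A 0 1 + star (A 1 0) * A 1 1 = 0 := by
    have := congrFun (congrFun hA 0) 1
    simpa [Matrix.mul_apply, Fin.sum_univ_two, Matrix.conjTranspose_apply,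
      Matrix.one_apply] using this
  have c10 : star (A 0 1) * A 0 0 + star (A 1 1) * A 1 0 = 0 := by
    have := congrFun (congrFun hA 1) 0
    simpa [Matrix.mul_apply, Fin.sum_univ_two, Matrix.conjTranspose_apply,
      Matrix.one_apply] using this
  have c11 : star (A 0 1) * A 0 1 + star (A 1 1) * A 1 1 = 1 := by
    have := congrFun (congrFun hA 1) 1
    simpa [Matrix.mul_apply, Fin.sum_univ_two, Matrix.conjTranspose_apply,
      Matrix.one_apply] using this
  have c01s : A 0 0 * star (A 0 1) + A 1 0 * star (A 1 1) = 0 := by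
    have := congrArg (starRingEnd ℂ) c01
    simpa [Complex.star_def, mul_comm] using this
  have c10s : A 0 1 * star (A 0 0) + A 1 1 * star (A 1 0) = 0 := by
    have := congrArg (starRingEnd ℂ) c10
    simpa [Complex.star_def, mul_comm] using this
  have hpres : ∀ u v : ℂ,
      Complex.normSq (A 0 0 * u + A 0 1 * v) + Complex.normSq (A 1 0 * u + A 1 1 * v)
        = Complex.normSq u + Complex.normSq v := by
    intro u v
    have h : (A 0 0 * u + A 0 1 * v) * (starRingEnd ℂ) (A 0 0 * u + A 0 1 * v)
        + (A 1 0 * u + A 1 1 * v) * (starRingEnd ℂ) (A 1 0 * u + A 1 1 * v)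
        = u * (starRingEnd ℂ) u + v * (starRingEnd ℂ) v := by
      simp only [Complex.star_def] at c00 c11 c01s c10s
      simp only [_root_.map_add, _root_.map_mul]
      linear_combination (u * (starRingEnd ℂ) u) * c00 + (v * (starRingEnd ℂ) v) * c11 +
        (u * (starRingEnd ℂ) v) * c01s + (v * (starRingEnd ℂ) u) * c10s
    rw [Complex.mul_conj, Complex.mul_conj, Complex.mul_conj, Complex.mul_conj] at h
    exact_mod_cast h
  have hrow : ∀ p, ∑ q, Complex.normSq (M p q) = 1 := by
    intro p
    have h := congrFun (congrFun hM p) p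
    rw [Matrix.mul_apply] at h
    simp only [Matrix.conjTranspose_apply, Matrix.one_apply_eq, Complex.star_def,
      Complex.mul_conj] at h
    exact_mod_cast h
  set B := embedAt k l A * M with hB
  have hother : ∀ p, p ≠ k → p ≠ l → rEnt B p = rEnt M p := by
    intro p h1 h2
    refine Finset.sum_congr rfl fun q _ => ?_
    rw [hB, embed_mul_apply_other _ _ _ _ h1 h2]
  have hmain : rEnt B k + rEnt B l ≤ rEnt M k + rEnt M l + 2 := by
    have per_q : ∀ q : Fin n,
        -(Complex.normSq (B k q) * Real.logb 2 (Complex.normSq (B k q)))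
          + -(Complex.normSq (B l q) * Real.logb 2 (Complex.normSq (B l q)))
        ≤ (-(Complex.normSq (M k q) * Real.logb 2 (Complex.normSq (M k q)))
          + -(Complex.normSq (M l q) * Real.logb 2 (Complex.normSq (M l q))))
          + (Complex.normSq (M k q) + Complex.normSq (M l q)) := by
      intro q
      have e1 : B k q = A 0 0 * M k q + A 0 1 * M l q :=
        embed_mul_apply_fst _ _ _ _ hkl q
      have e2 : B l q = A 1 0 * M k q + A 1 1 * M l q :=
        embed_mul_apply_snd _ _ _ _ hkl q
      refine ent_pair _ _ _ _ (Complex.normSq_nonneg _) (Complex.normSq_nonneg _)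
        (Complex.normSq_nonneg _) (Complex.normSq_nonneg _) ?_
      rw [e1, e2]
      exact hpres (M k q) (M l q)
    have hsum := Finset.sum_le_sum (fun q (_ : q ∈ Finset.univ) => per_q q)
    rw [Finset.sum_add_distrib] at hsum
    rw [Finset.sum_add_distrib] at hsum
    have h2 : ∑ x : Fin n, (Complex.normSq (M k x) + Complex.normSq (M l x)) = 2 := by
      rw [Finset.sum_add_distrib, hrow k, hrow l]; norm_num
    rw [h2] at hsum
    rw [Finset.sum_add_distrib] at hsum
    unfold rEnt
    linarith
  rw [matrixEntropy_eq_sum, matrixEntropy_eq_sum]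
  have hsplit : ∑ p, (rEnt B p - rEnt M p) = (rEnt B k - rEnt M k) + (rEnt B l - rEnt M l) :=
    Finset.sum_eq_add (s := Finset.univ) k l hkl
      (fun c _ hc => by rw [hother c hc.1 hc.2]; ring)
      (fun h => absurd (Finset.mem_univ _) h)
      (fun h => absurd (Finset.mem_univ _) h)
  rw [Finset.sum_sub_distrib] at hsplit
  linarith

lemma list_bound {n : ℕ} (L : List (Matrix (Fin n) (Fin n) ℂ))
    (h : ∀ B ∈ L, ∃ (k l : Fin n) (A : Matrix (Fin 2) (Fin 2) ℂ),
      k ≠ l ∧ Aᴴ * A = 1 ∧ B = embedAt k l A) :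
    L.prod * L.prodᴴ = 1 ∧ matrixEntropy L.prod ≤ 2 * L.length := by
  induction L with
  | nil => simp [matrixEntropy_one]
  | cons B L ih =>
    obtain ⟨hP, hE⟩ := ih (fun C hC => h C (List.mem_cons_of_mem _ hC))
    obtain ⟨k, l, A, hkl, hA, hB⟩ := h B List.mem_cons_self
    have hBu : B * Bᴴ = 1 := by rw [hB]; exact embed_mul_conjT k l A hkl hA
    constructor
    · rw [List.prod_cons, Matrix.conjTranspose_mul, Matrix.mul_assoc,
        ← Matrix.mul_assoc L.prod, hP, Matrix.one_mul]
      exact hBu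
    · rw [List.prod_cons, hB]
      have h1 : matrixEntropy (embedAt k l A * L.prod) ≤ matrixEntropy L.prod + 2 :=
        key_step k l A L.prod hkl hA hP
      have h2 : (L.length : ℝ) ≥ 0 := by positivity
      push_cast [List.length_cons]
      linarith

theorem matrixEntropy_prod_le {n m : ℕ} (hn : 2 ≤ n)
    (k l : Fin m → Fin n) (hkl : ∀ i, k i < l i)
    (A : Fin m → Matrix (Fin 2) (Fin 2) ℂ) (hA : ∀ i, (A i)ᴴ * A i = 1) :
    matrixEntropy
      ((List.ofFn fun i : Fin m => embedAt (k i) (l i) (A i)).reverse.prod)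
      ≤ 2 * m := by
  have h := (list_bound ((List.ofFn fun i : Fin m => embedAt (k i) (l i) (A i)).reverse)
    (by
      intro B hB
      rw [List.mem_reverse, List.mem_ofFn] at hB
      obtain ⟨i, rfl⟩ := hB
      exact ⟨k i, l i, A i, ne_of_lt (hkl i), hA i, rfl⟩)).2
  simpa [List.length_reverse, List.length_ofFn] using h
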